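/- Suppose K is a symmetric positive-definite n×n matrix partitioned into blocks K_{ij} ∈ ℝ^{n_i × n_j} each of which has constant row sums S_{ij}. Then the J×J matrix S with entries S_{ij} is non-singular. -/

import Mathlib

/-- If a symmetric positive-definite matrix `K` has a block structure in which
every block has constant row sums `S i j`, then the matrix `S` of row sums is
non-singular. -/
theorem rowSumMatrix_nonsingular {J : ℕ} (n : Fin J → ℕ) (hn : ∀ i, 0 < n i)
    (K : Matrix ((i : Fin J) × Fin (n i)) ((i : Fin J) × Fin (n i)) ℝ)
    (hKpd : K.PosDef)
    (S : Matrix (Fin J) (Fin J) ℝ)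
    (hS : ∀ (i j : Fin J) (p : Fin (n i)), ∑ q : Fin (n j), K ⟨i, p⟩ ⟨j, q⟩ = S i j) :
    IsUnit S.det := by
  rw [isUnit_iff_ne_zero]
  intro hdet
  obtain ⟨x, hx, hSx⟩ := (Matrix.exists_mulVec_eq_zero_iff).2 hdet
  set v : ((i : Fin J) × Fin (n i)) → ℝ := fun p => x p.1 with hv
  have hKv : K.mulVec v = 0 := by
    funext ⟨i, p⟩
    have : K.mulVec v ⟨i, p⟩ = ∑ j : Fin J, S i j * x j := by
      rw [Matrix.mulVec, dotProduct, ← Finset.univ_sigma_univ, Finset.sum_sigma]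
      refine Finset.sum_congr rfl fun j _ => ?_
      simp only [hv]
      rw [← Finset.sum_mul, hS]
    rw [this]
    have := congrFun hSx i
    simpa [Matrix.mulVec, dotProduct] using this
  have hvne : v ≠ 0 := by
    intro h
    apply hx
    funext i
    obtain ⟨p⟩ := Fin.pos_iff_nonempty.1 (hn i)
    have := congrFun h ⟨i, p⟩
    simpa [hv] using this
  have := hKpd.dotProduct_mulVec_pos hvne
  rw [hKv] at this
  simp at this
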